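/- Let n ≥ 1 and let q₁,…,qₙ be nonnegative integers with N = q₁ + ⋯ + qₙ. Then the coefficient of ∏_{j=1}^n x_j^{q_j + j − 1} in (x₁ + ⋯ + xₙ)^N · ∏_{1 ≤ i < j ≤ n}(x_j − x_i) equals N! · ∏_{0 ≤ i < j ≤ n−1} ((q_{j+1} + j) − (q_{i+1} + i)) / ∏_{j=0}^{n−1} (q_{j+1} + j)!. -/

import Mathlib

open MvPolynomial Finset

lemma vand_expand (n : ℕ) :
    (∏ j : Fin n, ∏ i ∈ Finset.univ.filter (· < j), ((X j : MvPolynomial (Fin n) ℤ) - X i)) =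
    ∑ σ : Equiv.Perm (Fin n), ((Equiv.Perm.sign σ : ℤ) : MvPolynomial (Fin n) ℤ) *
      ∏ j : Fin n, (X j : MvPolynomial (Fin n) ℤ) ^ (σ j : ℕ) := by
  have h1 : (∏ j : Fin n, ∏ i ∈ Finset.univ.filter (· < j),
      ((X j : MvPolynomial (Fin n) ℤ) - X i)) = (Matrix.vandermonde (X : Fin n → MvPolynomial (Fin n) ℤ)).det := by
    rw [Matrix.det_vandermonde]
    rw [Finset.prod_comm' (t' := Finset.univ) (t := fun i => Finset.Ioi i)
      (s' := fun j => Finset.univ.filter (· < j))]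
    intro i j
    simp [Finset.mem_Ioi]
  rw [h1, Matrix.det_apply']
  refine Fintype.sum_equiv (Equiv.inv (Equiv.Perm (Fin n))) _ _ ?_
  intro σ
  simp only [Equiv.inv_apply, Matrix.vandermonde_apply, Equiv.Perm.sign_inv]
  congr 1
  have := Equiv.prod_comp σ (fun j => (X j : MvPolynomial (Fin n) ℤ) ^ ((σ⁻¹ j : Fin n) : ℕ))
  rw [← this]
  apply Finset.prod_congr rfl
  intro i _
  rw [Equiv.Perm.inv_def, Equiv.symm_apply_apply]

lemma coeff_sum_X_pow (n N : ℕ) (d : Fin n →₀ ℕ) :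
    MvPolynomial.coeff d ((∑ j : Fin n, (X j : MvPolynomial (Fin n) ℤ)) ^ N) =
      if ∑ j, d j = N then (Nat.multinomial Finset.univ d : ℤ) else 0 := by
  rw [Finset.sum_pow_eq_sum_piAntidiag]
  rw [MvPolynomial.coeff_sum]
  have key : ∀ k : Fin n → ℕ, (∏ j : Fin n, (X j : MvPolynomial (Fin n) ℤ) ^ k j)
      = monomial (Finsupp.equivFunOnFinite.symm k) 1 := by
    intro k
    rw [MvPolynomial.monomial_eq, map_one, one_mul]
    rw [Finsupp.prod_fintype]
    · rfl
    · intro i; exact pow_zero _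
  have step : ∀ k ∈ Finset.piAntidiag Finset.univ N,
      MvPolynomial.coeff d ((Nat.multinomial Finset.univ k : MvPolynomial (Fin n) ℤ) *
        ∏ j : Fin n, (X j : MvPolynomial (Fin n) ℤ) ^ k j) =
      if k = ⇑d then (Nat.multinomial Finset.univ d : ℤ) else 0 := by
    intro k _
    rw [key k]
    rw [show ((Nat.multinomial Finset.univ k : MvPolynomial (Fin n) ℤ)) = C (Nat.multinomial Finset.univ k : ℤ) from rfl]
    rw [MvPolynomial.coeff_C_mul, MvPolynomial.coeff_monomial]
    by_cases h : k = ⇑d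
    · subst h
      simp
    · rw [if_neg, if_neg h, mul_zero]
      intro hc
      apply h
      conv_lhs => rw [show k = ⇑(Finsupp.equivFunOnFinite.symm k) from rfl]
      rw [hc]
  rw [Finset.sum_congr rfl step]
  rw [Finset.sum_ite_eq']
  by_cases hd : ∑ j, d j = N
  · rw [if_pos, if_pos hd]
    rw [Finset.mem_piAntidiag]
    exact ⟨hd, fun i _ => Finset.mem_univ i⟩
  · rw [if_neg, if_neg hd]
    rw [Finset.mem_piAntidiag]
    rintro ⟨h1, -⟩
    exact hd h1

lemma det_desc (n : ℕ) (lam : Fin n → ℕ) :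
    ∑ σ : Equiv.Perm (Fin n), ((Equiv.Perm.sign σ : ℤ) : ℚ) *
       ∏ j : Fin n, ((lam j).descFactorial (σ j) : ℚ)
    = ∏ i : Fin n, ∏ j ∈ Finset.Ioi i, ((lam j : ℚ) - (lam i : ℚ)) := by
  set A : Matrix (Fin n) (Fin n) ℚ :=
    Matrix.of fun i j => (descPochhammer ℚ (j : ℕ)).eval ((lam i : ℚ)) with hA
  have h1 : ∑ σ : Equiv.Perm (Fin n), ((Equiv.Perm.sign σ : ℤ) : ℚ) *
       ∏ j : Fin n, ((lam j).descFactorial (σ j) : ℚ) = (Matrix.transpose A).det := by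
    rw [Matrix.det_apply']
    apply Finset.sum_congr rfl
    intro σ _
    congr 1
    apply Finset.prod_congr rfl
    intro i _
    rw [hA]
    simp only [Matrix.transpose_apply, Matrix.of_apply]
    exact (descPochhammer_eval_eq_descFactorial ℚ _ _).symm
  rw [h1, Matrix.det_transpose]
  rw [← Matrix.det_eval_matrixOfPolynomials_eq_det_vandermonde (fun i => (lam i : ℚ))
    (fun j => descPochhammer ℚ (j : ℕ)) (fun i => descPochhammer_natDegree (R := ℚ) (i : ℕ))
    (fun i => monic_descPochhammer ℚ (i : ℕ))]
  rw [Matrix.det_vandermonde]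

lemma prod_Ioi_range (n : ℕ) (f : ℕ → ℚ) :
    ∏ i : Fin n, ∏ j ∈ Finset.Ioi i, (f j - f i) =
    ∏ j ∈ Finset.range n, ∏ i ∈ Finset.range j, (f j - f i) := by
  rw [Finset.prod_comm' (t' := Finset.univ) (t := fun i => Finset.Ioi i)
      (s' := fun j => Finset.univ.filter (· < j)) (fun i j => by simp [Finset.mem_Ioi])]
  rw [← Fin.prod_univ_eq_prod_range (fun j => ∏ i ∈ Finset.range j, (f j - f i)) n]
  apply Finset.prod_congr rfl
  intro j _
  apply Finset.prod_bij (fun (i : Fin n) _ => (i : ℕ))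
  · intro i hi
    simp only [Finset.mem_filter] at hi
    exact Finset.mem_range.mpr hi.2
  · intro a ha b hb h
    exact Fin.val_injective h
  · intro m hm
    have hmj : m < (j : ℕ) := Finset.mem_range.mp hm
    refine ⟨⟨m, lt_trans hmj j.2⟩, ?_, rfl⟩
    simp only [Finset.mem_filter, Finset.mem_univ, true_and]
    exact Fin.mk_lt_of_lt_val hmj
  · intro i _
    rfl

theorem stmt_17 (n : ℕ) (hn : 1 ≤ n) (q : ℕ → ℕ) (N : ℕ)
    (hN : N = ∑ i ∈ Finset.Icc 1 n, q i) :
    ((MvPolynomial.coeff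
        (Finsupp.equivFunOnFinite.symm fun j : Fin n => q (j.1 + 1) + j.1)
        (((∑ j : Fin n, (X j : MvPolynomial (Fin n) ℤ)) ^ N) *
          ∏ j : Fin n, ∏ i ∈ Finset.univ.filter (· < j), (X j - X i)) : ℤ) : ℚ) =
      (N.factorial : ℚ) *
        (∏ j ∈ Finset.range n, ∏ i ∈ Finset.range j,
            (((q (j + 1) + j : ℕ) : ℚ) - ((q (i + 1) + i : ℕ) : ℚ))) /
          ∏ j ∈ Finset.range n, ((q (j + 1) + j).factorial : ℚ) := by
  set lam : Fin n → ℕ := fun j => q (j.1 + 1) + j.1 with hlam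
  set m : Fin n →₀ ℕ := Finsupp.equivFunOnFinite.symm lam with hm
  set P : MvPolynomial (Fin n) ℤ := (∑ j : Fin n, (X j : MvPolynomial (Fin n) ℤ)) ^ N with hP
  -- sum of lam
  have hsum : ∑ j : Fin n, lam j = N + ∑ j : Fin n, (j : ℕ) := by
    rw [Finset.sum_add_distrib]
    congr 1
    rw [hN, Fin.sum_univ_eq_sum_range (fun i => q (i + 1)) n,
      ← Finset.Ico_add_one_right_eq_Icc, Finset.sum_Ico_eq_sum_range]
    simp [Nat.add_comm]
  -- the integer coefficient as a signed sum
  have hcoeff : MvPolynomial.coeff m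
      (P * ∏ j : Fin n, ∏ i ∈ Finset.univ.filter (· < j), ((X j : MvPolynomial (Fin n) ℤ) - X i))
      = ∑ σ : Equiv.Perm (Fin n), (Equiv.Perm.sign σ : ℤ) *
          (if ∀ j : Fin n, (σ j : ℕ) ≤ lam j
            then (Nat.multinomial Finset.univ (fun j => lam j - (σ j : ℕ)) : ℤ) else 0) := by
    rw [vand_expand, Finset.mul_sum, MvPolynomial.coeff_sum]
    apply Finset.sum_congr rfl
    intro σ _
    have key : (∏ j : Fin n, (X j : MvPolynomial (Fin n) ℤ) ^ ((σ j : ℕ)))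
        = monomial (Finsupp.equivFunOnFinite.symm fun j => (σ j : ℕ)) 1 := by
      rw [MvPolynomial.monomial_eq, map_one, one_mul]
      rw [Finsupp.prod_fintype]
      · rfl
      · intro i; exact pow_zero _
    set s : Fin n →₀ ℕ := Finsupp.equivFunOnFinite.symm fun j => (σ j : ℕ) with hs
    have hre : P * (((Equiv.Perm.sign σ : ℤ) : MvPolynomial (Fin n) ℤ) *
        ∏ j : Fin n, (X j : MvPolynomial (Fin n) ℤ) ^ ((σ j : ℕ)))
        = C ((Equiv.Perm.sign σ : ℤ)) * (P * monomial s 1) := by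
      rw [key, show ((Equiv.Perm.sign σ : ℤ) : MvPolynomial (Fin n) ℤ)
        = C ((Equiv.Perm.sign σ : ℤ)) from (map_intCast (C : ℤ →+* MvPolynomial (Fin n) ℤ) _).symm]
      ring
    rw [hre, MvPolynomial.coeff_C_mul]
    congr 1
    rw [MvPolynomial.coeff_mul_monomial']
    by_cases hle : s ≤ m
    · have hptle : ∀ j : Fin n, (σ j : ℕ) ≤ lam j := by
        intro j
        have := hle j
        simpa [hs, hm] using this
      rw [if_pos hle, mul_one, hP, coeff_sum_X_pow]
      have hms : ∀ j : Fin n, (m - s) j = lam j - (σ j : ℕ) := by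
        intro j
        simp [hm, hs, Finsupp.tsub_apply]
      have hsumc : ∑ j : Fin n, (m - s) j = N := by
        have h1 : ∑ j : Fin n, (m - s) j = ∑ j : Fin n, (lam j - (σ j : ℕ)) :=
          Finset.sum_congr rfl fun j _ => hms j
        have h2 : ∑ j : Fin n, ((σ j : ℕ)) = ∑ j : Fin n, (j : ℕ) :=
          Equiv.sum_comp σ (fun j => (j : ℕ))
        have h3 : ∑ j : Fin n, (lam j - (σ j : ℕ)) + ∑ j : Fin n, ((σ j : ℕ))
            = ∑ j : Fin n, lam j := by
          rw [← Finset.sum_add_distrib]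
          exact Finset.sum_congr rfl fun j _ => Nat.sub_add_cancel (hptle j)
        omega
      rw [if_pos hsumc, if_pos hptle]
      rfl
    · rw [if_neg hle, if_neg]
      intro hc
      apply hle
      intro j
      have := hc j
      simpa [hs, hm] using this
  rw [hcoeff]
  -- now pass to rationals
  have hDpos : (0:ℚ) < ∏ j ∈ Finset.range n, ((q (j + 1) + j).factorial : ℚ) := by
    apply Finset.prod_pos
    intro j _
    exact_mod_cast Nat.factorial_pos _
  rw [eq_div_iff (ne_of_gt hDpos)]
  have hD : (∏ j ∈ Finset.range n, ((q (j + 1) + j).factorial : ℚ))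
      = ∏ j : Fin n, ((lam j).factorial : ℚ) := by
    rw [← Fin.prod_univ_eq_prod_range (fun j => ((q (j + 1) + j).factorial : ℚ)) n]
  have hNum : (∏ j ∈ Finset.range n, ∏ i ∈ Finset.range j,
        (((q (j + 1) + j : ℕ) : ℚ) - ((q (i + 1) + i : ℕ) : ℚ)))
      = ∑ σ : Equiv.Perm (Fin n), ((Equiv.Perm.sign σ : ℤ) : ℚ) *
          ∏ j : Fin n, ((lam j).descFactorial (σ j) : ℚ) := by
    rw [det_desc n lam, prod_Ioi_range n (fun k => ((q (k + 1) + k : ℕ) : ℚ))]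
  rw [hD, hNum]
  push_cast
  rw [Finset.sum_mul, Finset.mul_sum]
  apply Finset.sum_congr rfl
  intro σ _
  rw [mul_assoc]
  rw [show ((N.factorial : ℚ) * (((Equiv.Perm.sign σ : ℤ) : ℚ) *
      ∏ j : Fin n, ((lam j).descFactorial (σ j) : ℚ)))
    = ((Equiv.Perm.sign σ : ℤ) : ℚ) * ((N.factorial : ℚ) *
      ∏ j : Fin n, ((lam j).descFactorial (σ j) : ℚ)) from by ring]
  congr 1
  by_cases hle : ∀ j : Fin n, (σ j : ℕ) ≤ lam j
  · rw [if_pos hle]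
    -- natural number identity, then cast
    have hnat : (Nat.multinomial Finset.univ (fun j => lam j - (σ j : ℕ))) *
        ∏ j : Fin n, (lam j).factorial
        = N.factorial * ∏ j : Fin n, (lam j).descFactorial (σ j) := by
      have hfac : ∀ j : Fin n, (lam j).factorial
          = (lam j - (σ j : ℕ)).factorial * (lam j).descFactorial (σ j) := by
        intro j
        exact (Nat.factorial_mul_descFactorial (hle j)).symm
      calc (Nat.multinomial Finset.univ (fun j => lam j - (σ j : ℕ))) *
            ∏ j : Fin n, (lam j).factorial
          = (Nat.multinomial Finset.univ (fun j => lam j - (σ j : ℕ))) *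
            ((∏ j : Fin n, (lam j - (σ j : ℕ)).factorial) *
             ∏ j : Fin n, (lam j).descFactorial (σ j)) := by
            rw [← Finset.prod_mul_distrib]
            congr 1
            exact Finset.prod_congr rfl fun j _ => hfac j
        _ = ((∏ j : Fin n, (lam j - (σ j : ℕ)).factorial) *
              Nat.multinomial Finset.univ (fun j => lam j - (σ j : ℕ))) *
             ∏ j : Fin n, (lam j).descFactorial (σ j) := by ring
        _ = N.factorial * ∏ j : Fin n, (lam j).descFactorial (σ j) := by
            rw [Nat.multinomial_spec]
            congr 2
            -- ∑ (lam j - σ j) = N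
            have h2 : ∑ j : Fin n, ((σ j : ℕ)) = ∑ j : Fin n, (j : ℕ) :=
              Equiv.sum_comp σ (fun j => (j : ℕ))
            have h3 : ∑ j : Fin n, (lam j - (σ j : ℕ)) + ∑ j : Fin n, ((σ j : ℕ))
                = ∑ j : Fin n, lam j := by
              rw [← Finset.sum_add_distrib]
              exact Finset.sum_congr rfl fun j _ => Nat.sub_add_cancel (hle j)
            omega
    exact_mod_cast hnat
  · rw [if_neg hle]
    push_neg at hle
    obtain ⟨j, hj⟩ := hle
    rw [zero_mul]
    have : ((lam j).descFactorial (σ j) : ℚ) = 0 := by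
      rw [Nat.descFactorial_eq_zero_iff_lt.mpr hj]
      norm_cast
    rw [Finset.prod_eq_zero (Finset.mem_univ j) this, mul_zero]
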